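/- Let N ≥ 1, let S, R be constant N×N complex matrices, and let Ψ₀ : (0,1) → GL_N(ℂ) be a smooth matrix-valued function satisfying y(1−y)Ψ₀'(y) = (S + yR)Ψ₀(y) for all y ∈ (0,1). Let a^{(κ)} : (0,1) → ℂ and F^{(κ)} : (0,1) → M_N(ℂ) be smooth, define the operator Ω^{(κ)} acting on the right of smooth matrix-valued functions Q on (0,1) by Q Ω^{(κ)} := y(1−y)Q'' + a^{(κ)}(y)Q' + Q F^{(κ)}(y), and define D^{(κ)} := Ψ₀ Ω^{(κ)} Ψ₀^{−1}, i.e. (P D^{(κ)})(y) := (((PΨ₀) Ω^{(κ)})(y)) Ψ₀(y)^{−1}. Then there exist constant N×N matrices C^{(κ)}, U^{(κ)}, V^{(κ)} such that (P D^{(κ)})(y) = y(1−y)P''(y) + P'(y)(C^{(κ)} − yU^{(κ)}) − P(y)V^{(κ)} for all smooth matrix-valued P on (0,1) if and only if a^{(κ)}(y)I = (C^{(κ)} − yU^{(κ)}) − 2(S + yR) and F^{(κ)}(y) = −Ψ₀(y)^{−1}V^{(κ)}Ψ₀(y) − y(1−y)Ψ₀(y)^{−1}Ψ₀''(y) − a^{(κ)}(y)Ψ₀(y)^{−1}Ψ₀'(y)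 for all y ∈ (0,1). -/

import Mathlib

open Matrix Set

/-- Entrywise derivative of a matrix-valued function on `ℝ`. -/
noncomputable def mderiv {N : ℕ} (Q : ℝ → Matrix (Fin N) (Fin N) ℂ) :
    ℝ → Matrix (Fin N) (Fin N) ℂ :=
  fun y => Matrix.of fun i j => deriv (fun t => Q t i j) y

/-- The operator `Ω^{(κ)}` acting on the right:
`Q Ω^{(κ)} = y(1−y)Q'' + a^{(κ)}(y)Q' + Q F^{(κ)}(y)`. -/
noncomputable def OmegaOp {N : ℕ} (a : ℝ → ℂ) (F : ℝ → Matrix (Fin N) (Fin N) ℂ)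
    (Q : ℝ → Matrix (Fin N) (Fin N) ℂ) : ℝ → Matrix (Fin N) (Fin N) ℂ :=
  fun y =>
    ((y : ℂ) * (1 - (y : ℂ))) • mderiv (mderiv Q) y + a y • mderiv Q y + Q y * F y

/-- The conjugated operator `D^{(κ)} = Ψ₀ Ω^{(κ)} Ψ₀⁻¹`:
`(P D^{(κ)})(y) = (((PΨ₀) Ω^{(κ)})(y)) Ψ₀(y)⁻¹`. -/
noncomputable def DconjOp {N : ℕ} (Ψ : ℝ → Matrix (Fin N) (Fin N) ℂ)
    (a : ℝ → ℂ) (F : ℝ → Matrix (Fin N) (Fin N) ℂ)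
    (P : ℝ → Matrix (Fin N) (Fin N) ℂ) : ℝ → Matrix (Fin N) (Fin N) ℂ :=
  fun y => OmegaOp a F (fun t => P t * Ψ t) y * (Ψ y)⁻¹

namespace Stmt2Aux

variable {N : ℕ}

def Sm (Q : ℝ → Matrix (Fin N) (Fin N) ℂ) : Prop :=
  ∀ i j, ContDiffOn ℝ (⊤ : ℕ∞) (fun t => Q t i j) (Set.Ioo 0 1)

lemma diffAt {Q : ℝ → Matrix (Fin N) (Fin N) ℂ} (h : Sm Q) {y : ℝ}
    (hy : y ∈ Ioo (0:ℝ) 1) (i j : Fin N) :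
    DifferentiableAt ℝ (fun t => Q t i j) y :=
  ((h i j).contDiffAt (isOpen_Ioo.mem_nhds hy)).differentiableAt (by simp)

lemma sm_mderiv {Q : ℝ → Matrix (Fin N) (Fin N) ℂ} (h : Sm Q) : Sm (mderiv Q) := by
  intro i j
  have h2 : ContDiffOn ℝ (⊤ : ℕ∞) (deriv (fun t => Q t i j)) (Ioo 0 1) :=
    (h i j).deriv_of_isOpen isOpen_Ioo (by simp)
  exact h2.congr fun t _ => rfl

lemma mderiv_apply (Q : ℝ → Matrix (Fin N) (Fin N) ℂ) (y : ℝ) (i j : Fin N) :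
    mderiv Q y i j = deriv (fun t => Q t i j) y := rfl

lemma sm_mul {A B : ℝ → Matrix (Fin N) (Fin N) ℂ} (hA : Sm A) (hB : Sm B) :
    Sm (fun t => A t * B t) := by
  intro i j
  have : ContDiffOn ℝ (⊤ : ℕ∞) (fun t => ∑ k, A t i k * B t k j) (Ioo 0 1) := by
    apply ContDiffOn.sum
    intro k _
    exact (hA i k).mul (hB k j)
  exact this.congr fun t _ => by simp [Matrix.mul_apply]

lemma mderiv_congr {A B : ℝ → Matrix (Fin N) (Fin N) ℂ}
    (h : ∀ t ∈ Ioo (0:ℝ) 1, A t = B t) {y : ℝ} (hy : y ∈ Ioo (0:ℝ) 1) :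
    mderiv A y = mderiv B y := by
  ext i j
  simp only [mderiv_apply]
  apply Filter.EventuallyEq.deriv_eq
  filter_upwards [isOpen_Ioo.mem_nhds hy] with t ht
  rw [h t ht]

lemma mderiv_add {A B : ℝ → Matrix (Fin N) (Fin N) ℂ} {y : ℝ}
    (hA : ∀ i j, DifferentiableAt ℝ (fun t => A t i j) y)
    (hB : ∀ i j, DifferentiableAt ℝ (fun t => B t i j) y) :
    mderiv (fun t => A t + B t) y = mderiv A y + mderiv B y := by
  ext i j
  simp only [mderiv_apply, Matrix.add_apply]
  exact deriv_add (hA i j) (hB i j)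

lemma mderiv_mul {A B : ℝ → Matrix (Fin N) (Fin N) ℂ} (hA : Sm A) (hB : Sm B)
    {y : ℝ} (hy : y ∈ Ioo (0:ℝ) 1) :
    mderiv (fun t => A t * B t) y = mderiv A y * B y + A y * mderiv B y := by
  ext i j
  simp only [mderiv_apply, Matrix.add_apply, Matrix.mul_apply]
  rw [deriv_fun_sum (fun k _ => ((diffAt hA hy i k).fun_mul (diffAt hB hy k j)))]
  rw [← Finset.sum_add_distrib]
  congr 1
  funext k
  exact deriv_fun_mul (diffAt hA hy i k) (diffAt hB hy k j)

lemma mderiv_mderiv_mul {A B : ℝ → Matrix (Fin N) (Fin N) ℂ} (hA : Sm A) (hB : Sm B)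
    {y : ℝ} (hy : y ∈ Ioo (0:ℝ) 1) :
    mderiv (mderiv (fun t => A t * B t)) y =
      mderiv (mderiv A) y * B y + (2:ℂ) • (mderiv A y * mderiv B y)
        + A y * mderiv (mderiv B) y := by
  have h1 : mderiv (mderiv (fun t => A t * B t)) y
      = mderiv (fun t => mderiv A t * B t + A t * mderiv B t) y :=
    mderiv_congr (fun t ht => mderiv_mul hA hB ht) hy
  rw [h1, mderiv_add (fun i j => diffAt (sm_mul (sm_mderiv hA) hB) hy i j)
      (fun i j => diffAt (sm_mul hA (sm_mderiv hB)) hy i j),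
    mderiv_mul (sm_mderiv hA) hB hy, mderiv_mul hA (sm_mderiv hB) hy]
  rw [two_smul]
  abel

lemma diff_ofReal (y : ℝ) : DifferentiableAt ℝ (fun t : ℝ => (t : ℂ)) y :=
  Complex.ofRealCLM.differentiableAt

lemma deriv_ofReal' (y : ℝ) : deriv (fun t : ℝ => (t : ℂ)) y = 1 := by
  have := (Complex.ofRealCLM.hasDerivAt (x := y)).deriv
  exact this

lemma mderiv_const (M : Matrix (Fin N) (Fin N) ℂ) (y : ℝ) :
    mderiv (fun _ : ℝ => M) y = 0 := by
  ext i j; simp [mderiv_apply]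

lemma mderiv_linear (M : Matrix (Fin N) (Fin N) ℂ) (y : ℝ) :
    mderiv (fun t : ℝ => (t : ℂ) • M) y = M := by
  ext i j
  simp only [mderiv_apply, Matrix.smul_apply, smul_eq_mul]
  rw [deriv_mul_const (diff_ofReal y), deriv_ofReal', one_mul]

lemma mderiv_ofReal_smul {M : ℝ → Matrix (Fin N) (Fin N) ℂ} {y : ℝ}
    (hM : ∀ i j, DifferentiableAt ℝ (fun t => M t i j) y) :
    mderiv (fun t : ℝ => (t : ℂ) • M t) y = M y + (y : ℂ) • mderiv M y := by
  ext i j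
  simp only [mderiv_apply, Matrix.add_apply, Matrix.smul_apply, smul_eq_mul]
  rw [deriv_fun_mul (diff_ofReal y) (hM i j), deriv_ofReal', one_mul]

end Stmt2Aux

namespace Stmt2Aux

lemma main_formula {N : ℕ} (S R : Matrix (Fin N) (Fin N) ℂ)
    {Ψ : ℝ → Matrix (Fin N) (Fin N) ℂ} (hΨ : Sm Ψ)
    (hΨinv : ∀ y ∈ Set.Ioo (0:ℝ) 1, IsUnit (Ψ y))
    (hΨode : ∀ y ∈ Set.Ioo (0:ℝ) 1,
      ((y : ℂ) * (1 - (y : ℂ))) • mderiv Ψ y = (S + (y : ℂ) • R) * Ψ y)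
    (a : ℝ → ℂ) (F : ℝ → Matrix (Fin N) (Fin N) ℂ)
    {P : ℝ → Matrix (Fin N) (Fin N) ℂ} (hP : Sm P)
    {y : ℝ} (hy : y ∈ Ioo (0:ℝ) 1) :
    DconjOp Ψ a F P y =
      ((y : ℂ) * (1 - (y : ℂ))) • mderiv (mderiv P) y
        + mderiv P y * ((2:ℂ) • (S + (y : ℂ) • R) + a y • 1)
        + P y * (((y : ℂ) * (1 - (y : ℂ))) • (mderiv (mderiv Ψ) y * (Ψ y)⁻¹)
            + a y • (mderiv Ψ y * (Ψ y)⁻¹) + Ψ y * F y * (Ψ y)⁻¹) := by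
  have hEE : Ψ y * (Ψ y)⁻¹ = 1 :=
    Matrix.mul_nonsing_inv _ ((Matrix.isUnit_iff_isUnit_det _).1 (hΨinv y hy))
  have hSR : S + (y : ℂ) • R = ((y : ℂ) * (1 - (y : ℂ))) • (mderiv Ψ y * (Ψ y)⁻¹) := by
    rw [← Matrix.smul_mul, hΨode y hy, Matrix.mul_assoc, hEE, Matrix.mul_one]
  show OmegaOp a F (fun t => P t * Ψ t) y * (Ψ y)⁻¹ = _
  rw [hSR]
  show (((y : ℂ) * (1 - (y : ℂ))) • mderiv (mderiv fun t => P t * Ψ t) y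
      + a y • mderiv (fun t => P t * Ψ t) y + (P y * Ψ y) * F y) * (Ψ y)⁻¹ = _
  rw [mderiv_mul hP hΨ hy, mderiv_mderiv_mul hP hΨ hy]
  simp only [Matrix.add_mul, Matrix.smul_mul, Matrix.mul_smul, Matrix.mul_add,
    smul_add, smul_smul, Matrix.mul_assoc, hEE, Matrix.mul_one]
  module

end Stmt2Aux

namespace Stmt2Aux

lemma mderiv_mderiv_const {N : ℕ} (M : Matrix (Fin N) (Fin N) ℂ) (y : ℝ) :
    mderiv (mderiv (fun _ : ℝ => M)) y = 0 := by
  have h : mderiv (fun _ : ℝ => M) = fun _ : ℝ => (0 : Matrix (Fin N) (Fin N) ℂ) :=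
    funext fun t => mderiv_const M t
  rw [h, mderiv_const]

lemma mderiv_mderiv_linear {N : ℕ} (M : Matrix (Fin N) (Fin N) ℂ) (y : ℝ) :
    mderiv (mderiv (fun t : ℝ => (t : ℂ) • M)) y = 0 := by
  have h : mderiv (fun t : ℝ => (t : ℂ) • M) = fun _ : ℝ => M :=
    funext fun t => mderiv_linear M t
  rw [h, mderiv_const]

end Stmt2Aux


open Stmt2Aux

/-- `D^{(κ)} = Ψ₀ Ω^{(κ)} Ψ₀⁻¹` is a matrix-valued hypergeometric operator
`y(1−y)∂² + ∂(C − yU) − V` for some constant matrices `C, U, V` if and only if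
`a^{(κ)}(y)I = (C − yU) − 2(S + yR)` and
`F^{(κ)}(y) = −Ψ₀⁻¹VΨ₀ − y(1−y)Ψ₀⁻¹Ψ₀'' − a^{(κ)}(y)Ψ₀⁻¹Ψ₀'` for those matrices. -/

theorem stmt2 {N : ℕ} (hN : 1 ≤ N) (S R : Matrix (Fin N) (Fin N) ℂ)
    (Ψ : ℝ → Matrix (Fin N) (Fin N) ℂ)
    (hΨsmooth : ∀ i j, ContDiffOn ℝ (⊤ : ℕ∞) (fun t => Ψ t i j) (Set.Ioo 0 1))
    (hΨinv : ∀ y ∈ Set.Ioo (0:ℝ) 1, IsUnit (Ψ y))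
    (hΨode : ∀ y ∈ Set.Ioo (0:ℝ) 1,
      ((y : ℂ) * (1 - (y : ℂ))) • mderiv Ψ y = (S + (y : ℂ) • R) * Ψ y)
    (a : ℝ → ℂ) (F : ℝ → Matrix (Fin N) (Fin N) ℂ)
    (ha : ContDiffOn ℝ (⊤ : ℕ∞) a (Set.Ioo 0 1))
    (hF : ∀ i j, ContDiffOn ℝ (⊤ : ℕ∞) (fun t => F t i j) (Set.Ioo 0 1)) :
    (∃ C U V : Matrix (Fin N) (Fin N) ℂ,
      ∀ P : ℝ → Matrix (Fin N) (Fin N) ℂ,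
        (∀ i j, ContDiffOn ℝ (⊤ : ℕ∞) (fun t => P t i j) (Set.Ioo 0 1)) →
        ∀ y ∈ Set.Ioo (0:ℝ) 1,
          DconjOp Ψ a F P y =
            ((y : ℂ) * (1 - (y : ℂ))) • mderiv (mderiv P) y
              + mderiv P y * (C - (y : ℂ) • U) - P y * V)
    ↔
    (∃ C U V : Matrix (Fin N) (Fin N) ℂ,
      ∀ y ∈ Set.Ioo (0:ℝ) 1,
        a y • (1 : Matrix (Fin N) (Fin N) ℂ)
            = (C - (y : ℂ) • U) - (2 : ℂ) • (S + (y : ℂ) • R)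
        ∧ F y = -((Ψ y)⁻¹ * V * Ψ y)
            - ((y : ℂ) * (1 - (y : ℂ))) • ((Ψ y)⁻¹ * mderiv (mderiv Ψ) y)
            - a y • ((Ψ y)⁻¹ * mderiv Ψ y)) := by
  constructor
  · rintro ⟨C, U, V, hP⟩
    refine ⟨C, U, V, fun y hy => ?_⟩
    have hdet : IsUnit (Ψ y).det := (Matrix.isUnit_iff_isUnit_det _).1 (hΨinv y hy)
    have hEE : Ψ y * (Ψ y)⁻¹ = 1 := Matrix.mul_nonsing_inv _ hdet
    have hE'E : (Ψ y)⁻¹ * Ψ y = 1 := Matrix.nonsing_inv_mul _ hdet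
    have sm1 : Sm (fun _ : ℝ => (1 : Matrix (Fin N) (Fin N) ℂ)) :=
      fun i j => contDiffOn_const
    have sm2 : Sm (fun t : ℝ => (t : ℂ) • (1 : Matrix (Fin N) (Fin N) ℂ)) := by
      intro i j
      exact ((Complex.ofRealCLM.contDiff.contDiffOn).mul contDiffOn_const).congr
        (fun t _ => rfl)
    have e1 := hP (fun _ => 1) sm1 y hy
    rw [main_formula S R hΨsmooth hΨinv hΨode a F sm1 hy] at e1
    simp only [mderiv_const, mderiv_mderiv_const, smul_zero, Matrix.zero_mul,
      Matrix.one_mul, zero_add, zero_sub] at e1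
    have e2 := hP (fun t => (t : ℂ) • 1) sm2 y hy
    rw [main_formula S R hΨsmooth hΨinv hΨode a F sm2 hy] at e2
    simp only [mderiv_linear, mderiv_mderiv_linear, smul_zero, zero_add,
      Matrix.one_mul, Matrix.smul_mul] at e2
    rw [e1] at e2
    constructor
    · calc a y • (1 : Matrix (Fin N) (Fin N) ℂ)
          = ((2:ℂ) • (S + (y:ℂ) • R) + a y • 1
              + (y:ℂ) • (-V : Matrix (Fin N) (Fin N) ℂ))
            - (2:ℂ) • (S + (y:ℂ) • R) - (y:ℂ) • (-V) := by abel
        _ = ((C - (y:ℂ) • U) - (y:ℂ) • V)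
            - (2:ℂ) • (S + (y:ℂ) • R) - (y:ℂ) • (-V) := by rw [e2]
        _ = (C - (y:ℂ) • U) - (2:ℂ) • (S + (y:ℂ) • R) := by rw [smul_neg]; abel
    · have hEF : Ψ y * F y * (Ψ y)⁻¹
          = -V - ((y:ℂ) * (1 - (y:ℂ))) • (mderiv (mderiv Ψ) y * (Ψ y)⁻¹)
            - a y • (mderiv Ψ y * (Ψ y)⁻¹) := by
        rw [← e1]; abel
      have hid : (Ψ y)⁻¹ * (Ψ y * F y * (Ψ y)⁻¹) * Ψ y = F y := by
        rw [Matrix.mul_assoc (Ψ y) (F y) (Ψ y)⁻¹,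
          ← Matrix.mul_assoc (Ψ y)⁻¹ (Ψ y) (F y * (Ψ y)⁻¹), hE'E, Matrix.one_mul,
          Matrix.mul_assoc (F y) (Ψ y)⁻¹ (Ψ y), hE'E, Matrix.mul_one]
      have r : ∀ X : Matrix (Fin N) (Fin N) ℂ,
          (Ψ y)⁻¹ * (X * (Ψ y)⁻¹) * Ψ y = (Ψ y)⁻¹ * X := by
        intro X
        rw [← Matrix.mul_assoc (Ψ y)⁻¹ X (Ψ y)⁻¹,
          Matrix.mul_assoc ((Ψ y)⁻¹ * X) (Ψ y)⁻¹ (Ψ y), hE'E, Matrix.mul_one]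
      calc F y = (Ψ y)⁻¹ * (Ψ y * F y * (Ψ y)⁻¹) * Ψ y := hid.symm
        _ = (Ψ y)⁻¹ * (-V - ((y:ℂ) * (1 - (y:ℂ))) • (mderiv (mderiv Ψ) y * (Ψ y)⁻¹)
              - a y • (mderiv Ψ y * (Ψ y)⁻¹)) * Ψ y := by rw [hEF]
        _ = -((Ψ y)⁻¹ * V * Ψ y)
            - ((y:ℂ) * (1 - (y:ℂ))) • ((Ψ y)⁻¹ * (mderiv (mderiv Ψ) y * (Ψ y)⁻¹) * Ψ y)
            - a y • ((Ψ y)⁻¹ * (mderiv Ψ y * (Ψ y)⁻¹) * Ψ y) := by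
            simp only [Matrix.mul_sub, Matrix.sub_mul, Matrix.mul_neg, Matrix.neg_mul,
              Matrix.mul_smul, Matrix.smul_mul, Matrix.mul_assoc]
        _ = -((Ψ y)⁻¹ * V * Ψ y)
            - ((y:ℂ) * (1 - (y:ℂ))) • ((Ψ y)⁻¹ * mderiv (mderiv Ψ) y)
            - a y • ((Ψ y)⁻¹ * mderiv Ψ y) := by rw [r, r]
  · rintro ⟨C, U, V, h⟩
    refine ⟨C, U, V, fun P hPsm y hy => ?_⟩
    have hdet : IsUnit (Ψ y).det := (Matrix.isUnit_iff_isUnit_det _).1 (hΨinv y hy)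
    have hEE : Ψ y * (Ψ y)⁻¹ = 1 := Matrix.mul_nonsing_inv _ hdet
    have hE'E : (Ψ y)⁻¹ * Ψ y = 1 := Matrix.nonsing_inv_mul _ hdet
    obtain ⟨h1, h2⟩ := h y hy
    rw [main_formula S R hΨsmooth hΨinv hΨode a F hPsm hy]
    have hc : (2:ℂ) • (S + (y:ℂ) • R) + a y • (1 : Matrix (Fin N) (Fin N) ℂ)
        = C - (y:ℂ) • U := by rw [h1]; abel
    have hcoef : ((y:ℂ) * (1 - (y:ℂ))) • (mderiv (mderiv Ψ) y * (Ψ y)⁻¹)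
        + a y • (mderiv Ψ y * (Ψ y)⁻¹) + Ψ y * F y * (Ψ y)⁻¹ = -V := by
      rw [h2]
      have r1 : Ψ y * ((Ψ y)⁻¹ * V * Ψ y) * (Ψ y)⁻¹ = V := by
        rw [Matrix.mul_assoc (Ψ y)⁻¹ V (Ψ y),
          ← Matrix.mul_assoc (Ψ y) (Ψ y)⁻¹ (V * Ψ y), hEE, Matrix.one_mul,
          Matrix.mul_assoc V (Ψ y) (Ψ y)⁻¹, hEE, Matrix.mul_one]
      have r2 : ∀ X : Matrix (Fin N) (Fin N) ℂ,
          Ψ y * ((Ψ y)⁻¹ * X) * (Ψ y)⁻¹ = X * (Ψ y)⁻¹ := by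
        intro X
        rw [← Matrix.mul_assoc (Ψ y) (Ψ y)⁻¹ X, hEE, Matrix.one_mul]
      simp only [Matrix.mul_sub, Matrix.sub_mul, Matrix.mul_neg, Matrix.neg_mul,
        Matrix.mul_smul, Matrix.smul_mul]
      rw [r1, r2, r2]
      abel
    rw [hc, hcoef, Matrix.mul_neg, ← sub_eq_add_neg]
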